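/- For the FFT graph F_n (n ≥ 1), let V be any nonempty subset of vertices and define δ(V) to be the number of vertices of V lying in layer 0 or layer n, plus the number of edges of F_n joining a vertex of V to a vertex not in V. Then |V| ≤ 2·δ(V)·log₂(δ(V)). -/

import Mathlib

/-- The `2^n`-point FFT (butterfly) graph: vertices `(k, i)` with `0 ≤ k ≤ n`,
`0 ≤ i < 2^n`, and `(k, i)` joined to `(k+1, i)` and `(k+1, i XOR 2^k)` for `k < n`. -/
def fftGraph (n : ℕ) : SimpleGraph (Fin (n + 1) × Fin (2 ^ n)) :=
  SimpleGraph.fromRel (fun a b =>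
    (b.1 : ℕ) = (a.1 : ℕ) + 1 ∧
      ((b.2 : ℕ) = (a.2 : ℕ) ∨ (b.2 : ℕ) = (a.2 : ℕ) ^^^ 2 ^ (a.1 : ℕ)))

namespace FFTAux

open Finset Real

abbrev Vtx (n : ℕ) := Fin (n + 1) × Fin (2 ^ n)

instance fftDec (n : ℕ) : DecidableRel (fftGraph n).Adj := fun a b =>
  decidable_of_iff _ (SimpleGraph.fromRel_adj _ a b).symm

def bndF (n m : ℕ) (A : Finset (Vtx n)) : Finset (Vtx n) :=
  A.filter (fun v => (v.1 : ℕ) = 0 ∨ (v.1 : ℕ) = m)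

def cutF (n m : ℕ) (A : Finset (Vtx n)) : Finset (Vtx n × Vtx n) :=
  Finset.univ.filter (fun p => (fftGraph n).Adj p.1 p.2 ∧ (p.1.1 : ℕ) ≤ m ∧ (p.2.1 : ℕ) ≤ m ∧
    p.1 ∈ A ∧ p.2 ∉ A)

def dd (n m : ℕ) (A : Finset (Vtx n)) : ℕ := (bndF n m A).card + (cutF n m A).card

lemma mem_bndF {n m : ℕ} {A : Finset (Vtx n)} {v : Vtx n} :
    v ∈ bndF n m A ↔ v ∈ A ∧ ((v.1 : ℕ) = 0 ∨ (v.1 : ℕ) = m) := by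
  simp [bndF]

lemma mem_cutF {n m : ℕ} {A : Finset (Vtx n)} {p : Vtx n × Vtx n} :
    p ∈ cutF n m A ↔ (fftGraph n).Adj p.1 p.2 ∧ (p.1.1 : ℕ) ≤ m ∧ (p.2.1 : ℕ) ≤ m ∧
      p.1 ∈ A ∧ p.2 ∉ A := by
  simp [cutF]

lemma adj_of_up {n : ℕ} {v w : Vtx n} (h1 : (w.1 : ℕ) = (v.1 : ℕ) + 1)
    (h2 : (w.2 : ℕ) = (v.2 : ℕ) ∨ (w.2 : ℕ) = (v.2 : ℕ) ^^^ 2 ^ (v.1 : ℕ)) :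
    (fftGraph n).Adj v w := by
  rw [fftGraph, SimpleGraph.fromRel_adj]
  exact ⟨fun hvw => by rw [hvw] at h1; omega, Or.inl ⟨h1, h2⟩⟩

lemma adj_cases {n : ℕ} {v w : Vtx n} (h : (fftGraph n).Adj v w) :
    ((w.1 : ℕ) = (v.1 : ℕ) + 1 ∧
      ((w.2 : ℕ) = (v.2 : ℕ) ∨ (w.2 : ℕ) = (v.2 : ℕ) ^^^ 2 ^ (v.1 : ℕ))) ∨
    ((v.1 : ℕ) = (w.1 : ℕ) + 1 ∧
      ((v.2 : ℕ) = (w.2 : ℕ) ∨ (v.2 : ℕ) = (w.2 : ℕ) ^^^ 2 ^ (w.1 : ℕ))) := by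
  rw [fftGraph, SimpleGraph.fromRel_adj] at h
  tauto

lemma xor_bound {n : ℕ} (i : Fin (2 ^ n)) {k : ℕ} (hk : k < n) : (i : ℕ) ^^^ 2 ^ k < 2 ^ n :=
  Nat.xor_lt_two_pow i.isLt (Nat.pow_lt_pow_right one_lt_two hk)

lemma testBit_xor_pow {x k m : ℕ} (hk : k ≠ m) : (x ^^^ 2 ^ k).testBit m = x.testBit m := by
  simp [Nat.testBit_xor, Nat.testBit_two_pow_of_ne hk]

lemma testBit_eq_of_adj {n m : ℕ} {v w : Vtx n} (h : (fftGraph n).Adj v w)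
    (hv : (v.1 : ℕ) ≤ m) (hw : (w.1 : ℕ) ≤ m) :
    (v.2 : ℕ).testBit m = (w.2 : ℕ).testBit m := by
  rcases adj_cases h with ⟨h1, h2 | h2⟩ | ⟨h1, h2 | h2⟩
  · rw [h2]
  · rw [h2, testBit_xor_pow (by omega)]
  · rw [h2]
  · rw [h2, testBit_xor_pow (by omega)]

lemma xor_ne_self {x k : ℕ} : x ^^^ 2 ^ k ≠ x := by
  intro h
  have h2 : x ^^^ (x ^^^ 2 ^ k) = x ^^^ x := by rw [h]
  rw [xor_cancel_left, Nat.xor_self] at h2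
  exact absurd h2 (by positivity)

end FFTAux

namespace FFTAux
open Finset

lemma two_le_dd {n m : ℕ} (hm : 1 ≤ m) (hmn : m ≤ n) {A : Finset (Vtx n)}
    (hA : A.Nonempty) (hsupp : ∀ v ∈ A, (v.1 : ℕ) ≤ m) : 2 ≤ dd n m A := by
  have hdd : (bndF n m A).card + (cutF n m A).card = dd n m A := rfl
  obtain ⟨v, hv, hvmax⟩ := A.exists_max_image (fun v => (v.1 : ℕ)) hA
  by_cases hkm : (v.1 : ℕ) = m
  · obtain ⟨u, hu, humin⟩ := A.exists_min_image (fun v => (v.1 : ℕ)) hA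
    by_cases hk0 : (u.1 : ℕ) = 0
    · have hne : u ≠ v := by intro h; rw [h] at hk0; omega
      have h2 : 1 < (bndF n m A).card := Finset.one_lt_card.mpr
        ⟨u, mem_bndF.mpr ⟨hu, Or.inl hk0⟩, v, mem_bndF.mpr ⟨hv, Or.inr hkm⟩, hne⟩
      omega
    · have hk1 : 1 ≤ (u.1 : ℕ) := by omega
      have hum : (u.1 : ℕ) ≤ m := hsupp u hu
      have hklt : (u.1 : ℕ) - 1 < n := by omega
      set k : ℕ := (u.1 : ℕ) with hk
      let w₁ : Vtx n := (⟨k - 1, by omega⟩, u.2)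
      let w₂ : Vtx n := (⟨k - 1, by omega⟩, ⟨(u.2 : ℕ) ^^^ 2 ^ (k - 1), xor_bound u.2 hklt⟩)
      have haw₁ : (fftGraph n).Adj w₁ u := adj_of_up (by show k = k - 1 + 1; omega) (Or.inl rfl)
      have haw₂ : (fftGraph n).Adj w₂ u :=
        adj_of_up (by show k = k - 1 + 1; omega)
          (Or.inr (xor_cancel_right _ _).symm)
      have hw₁A : w₁ ∉ A := fun h => absurd (humin w₁ h) (by show ¬ (k ≤ k - 1); omega)
      have hw₂A : w₂ ∉ A := fun h => absurd (humin w₂ h) (by show ¬ (k ≤ k - 1); omega)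
      have hp₁ : (u, w₁) ∈ cutF n m A := mem_cutF.mpr
        ⟨haw₁.symm, by show k ≤ m; omega, by show k - 1 ≤ m; omega, hu, hw₁A⟩
      have hp₂ : (u, w₂) ∈ cutF n m A := mem_cutF.mpr
        ⟨haw₂.symm, by show k ≤ m; omega, by show k - 1 ≤ m; omega, hu, hw₂A⟩
      have hne : (u, w₁) ≠ (u, w₂) := by
        intro h
        have h3 : (u.2 : ℕ) = (u.2 : ℕ) ^^^ 2 ^ (k - 1) :=
          congrArg (fun p => ((p.2.2 : Fin (2 ^ n)) : ℕ)) h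
        exact xor_ne_self h3.symm
      have h2 : 1 < (cutF n m A).card := Finset.one_lt_card.mpr ⟨_, hp₁, _, hp₂, hne⟩
      omega
  · have hkm' : (v.1 : ℕ) < m := lt_of_le_of_ne (hsupp v hv) hkm
    set k : ℕ := (v.1 : ℕ) with hk
    have hkn : k < n := by omega
    let w₁ : Vtx n := (⟨k + 1, by omega⟩, v.2)
    let w₂ : Vtx n := (⟨k + 1, by omega⟩, ⟨(v.2 : ℕ) ^^^ 2 ^ k, xor_bound v.2 hkn⟩)
    have haw₁ : (fftGraph n).Adj v w₁ := adj_of_up rfl (Or.inl rfl)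
    have haw₂ : (fftGraph n).Adj v w₂ := adj_of_up rfl (Or.inr rfl)
    have hw₁A : w₁ ∉ A := fun h => absurd (hvmax w₁ h) (by show ¬ (k + 1 ≤ k); omega)
    have hw₂A : w₂ ∉ A := fun h => absurd (hvmax w₂ h) (by show ¬ (k + 1 ≤ k); omega)
    have hp₁ : (v, w₁) ∈ cutF n m A := mem_cutF.mpr
      ⟨haw₁, by show k ≤ m; omega, by show k + 1 ≤ m; omega, hv, hw₁A⟩
    have hp₂ : (v, w₂) ∈ cutF n m A := mem_cutF.mpr
      ⟨haw₂, by show k ≤ m; omega, by show k + 1 ≤ m; omega, hv, hw₂A⟩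
    have hne : (v, w₁) ≠ (v, w₂) := by
      intro h
      have h3 : (v.2 : ℕ) = (v.2 : ℕ) ^^^ 2 ^ k :=
        congrArg (fun p => ((p.2.2 : Fin (2 ^ n)) : ℕ)) h
      exact xor_ne_self h3.symm
    have h2 : 1 < (cutF n m A).card := Finset.one_lt_card.mpr ⟨_, hp₁, _, hp₂, hne⟩
    omega

end FFTAux

namespace FFTAux
open Finset

variable {n m : ℕ}

/-- vertices of `A` in layer `m+1` -/
def Tt (n m : ℕ) (A : Finset (Vtx n)) : Finset (Vtx n) := A.filter (fun v => (v.1:ℕ) = m+1)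
/-- vertices of `A` in layer `m+1` with given bit `m` -/
def Tb (n m : ℕ) (A : Finset (Vtx n)) (b : Bool) : Finset (Vtx n) :=
  A.filter (fun v => (v.1:ℕ) = m+1 ∧ (v.2:ℕ).testBit m = b)
/-- vertices of `A` in layers `≤ m` on side `b` -/
def Bb (n m : ℕ) (A : Finset (Vtx n)) (b : Bool) : Finset (Vtx n) :=
  A.filter (fun v => (v.1:ℕ) ≤ m ∧ (v.2:ℕ).testBit m = b)
/-- vertices of `A` in layer `m` -/
def Aa (n m : ℕ) (A : Finset (Vtx n)) : Finset (Vtx n) := A.filter (fun v => (v.1:ℕ) = m)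
def Aab (n m : ℕ) (A : Finset (Vtx n)) (b : Bool) : Finset (Vtx n) :=
  A.filter (fun v => (v.1:ℕ) = m ∧ (v.2:ℕ).testBit m = b)
def Zz (n : ℕ) (A : Finset (Vtx n)) : Finset (Vtx n) := A.filter (fun v => (v.1:ℕ) = 0)
def Zzb (n m : ℕ) (A : Finset (Vtx n)) (b : Bool) : Finset (Vtx n) :=
  A.filter (fun v => (v.1:ℕ) = 0 ∧ (v.2:ℕ).testBit m = b)

/-- straight up map to layer `m+1` -/
def uS (n m : ℕ) (h : m + 1 ≤ n) : Vtx n → Vtx n := fun v => (⟨m+1, by omega⟩, v.2)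
/-- straight down map to layer `m` -/
def dS (n m : ℕ) (h : m + 1 ≤ n) : Vtx n → Vtx n := fun v => (⟨m, by omega⟩, v.2)
/-- flip down map to layer `m` -/
def dX (n m : ℕ) (h : m + 1 ≤ n) : Vtx n → Vtx n :=
  fun v => (⟨m, by omega⟩, ⟨(v.2:ℕ) ^^^ 2 ^ m, xor_bound v.2 (by omega)⟩)

def E3 (n m : ℕ) (h : m + 1 ≤ n) (A : Finset (Vtx n)) : Finset (Vtx n × Vtx n) :=
  (A.filter (fun v => (v.1:ℕ) = m ∧ uS n m h v ∉ A)).image (fun v => (v, uS n m h v))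
def E4 (n m : ℕ) (h : m + 1 ≤ n) (A : Finset (Vtx n)) (b : Bool) : Finset (Vtx n × Vtx n) :=
  (A.filter (fun t => (t.1:ℕ) = m+1 ∧ (t.2:ℕ).testBit m = b ∧ dS n m h t ∉ A)).image
    (fun t => (t, dS n m h t))
def E5 (n m : ℕ) (h : m + 1 ≤ n) (A : Finset (Vtx n)) (b : Bool) : Finset (Vtx n × Vtx n) :=
  (A.filter (fun t => (t.1:ℕ) = m+1 ∧ (t.2:ℕ).testBit m = b ∧ dX n m h t ∉ A)).image
    (fun t => (t, dX n m h t))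

section Shapes
variable {h : m + 1 ≤ n} {A : Finset (Vtx n)}

lemma shE1 {b : Bool} : ∀ p ∈ cutF n m (Bb n m A b),
    (p.1.1:ℕ) ≤ m ∧ (p.2.1:ℕ) ≤ m ∧ (p.1.2:ℕ).testBit m = b := by
  intro p hp
  obtain ⟨-, h1, h2, h3, -⟩ := mem_cutF.mp hp
  exact ⟨h1, h2, ((Finset.mem_filter.mp h3).2).2⟩

lemma shE3 : ∀ p ∈ E3 n m h A, (p.1.1:ℕ) = m ∧ (p.2.1:ℕ) = m + 1 := by
  intro p hp
  obtain ⟨v, hv, rfl⟩ := Finset.mem_image.mp hp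
  exact ⟨(Finset.mem_filter.mp hv).2.1, rfl⟩

lemma shE4 {b : Bool} : ∀ p ∈ E4 n m h A b,
    (p.1.1:ℕ) = m + 1 ∧ (p.2.1:ℕ) = m ∧ (p.1.2:ℕ).testBit m = b ∧ (p.2.2:ℕ) = (p.1.2:ℕ) := by
  intro p hp
  obtain ⟨v, hv, rfl⟩ := Finset.mem_image.mp hp
  exact ⟨(Finset.mem_filter.mp hv).2.1, rfl, (Finset.mem_filter.mp hv).2.2.1, rfl⟩

lemma shE5 {b : Bool} : ∀ p ∈ E5 n m h A b,
    (p.1.1:ℕ) = m + 1 ∧ (p.2.1:ℕ) = m ∧ (p.1.2:ℕ).testBit m = b ∧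
      (p.2.2:ℕ) = (p.1.2:ℕ) ^^^ 2 ^ m := by
  intro p hp
  obtain ⟨v, hv, rfl⟩ := Finset.mem_image.mp hp
  exact ⟨(Finset.mem_filter.mp hv).2.1, rfl, (Finset.mem_filter.mp hv).2.2.1, rfl⟩

end Shapes

lemma disj2 {s t : Finset (Vtx n × Vtx n)} {P Q : Vtx n × Vtx n → Prop}
    (hs : ∀ p ∈ s, P p) (ht : ∀ p ∈ t, Q p) (hpq : ∀ p, P p → Q p → False) :
    Disjoint s t :=
  Finset.disjoint_left.mpr fun {p} hp hq => (hpq p (hs p hp) (ht p hq)).elim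

end FFTAux

namespace FFTAux
open Finset

variable {n m : ℕ} {A : Finset (Vtx n)}

lemma subE1 {b : Bool} (h : m + 1 ≤ n) : cutF n m (Bb n m A b) ⊆ cutF n (m+1) A := by
  intro p hp
  obtain ⟨hadj, h1, h2, h3, h4⟩ := mem_cutF.mp hp
  obtain ⟨h3A, h3m, h3b⟩ := Finset.mem_filter.mp h3
  refine mem_cutF.mpr ⟨hadj, by omega, by omega, h3A, fun hA => h4 ?_⟩
  refine Finset.mem_filter.mpr ⟨hA, h2, ?_⟩
  rw [← testBit_eq_of_adj hadj h3m h2]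
  exact h3b

lemma subE3 (h : m + 1 ≤ n) : E3 n m h A ⊆ cutF n (m+1) A := by
  intro p hp
  obtain ⟨v, hv, rfl⟩ := Finset.mem_image.mp hp
  obtain ⟨hvA, hvm, hvu⟩ := Finset.mem_filter.mp hv
  have hadj : (fftGraph n).Adj v (uS n m h v) :=
    adj_of_up (by show m + 1 = (v.1:ℕ) + 1; omega) (Or.inl rfl)
  exact mem_cutF.mpr ⟨hadj, by show (v.1:ℕ) ≤ m + 1; omega, by show m + 1 ≤ m + 1; omega, hvA, hvu⟩

lemma subE4 {b : Bool} (h : m + 1 ≤ n) : E4 n m h A b ⊆ cutF n (m+1) A := by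
  intro p hp
  obtain ⟨t, ht, rfl⟩ := Finset.mem_image.mp hp
  obtain ⟨htA, htm, htb, htd⟩ := Finset.mem_filter.mp ht
  have hadj : (fftGraph n).Adj (dS n m h t) t :=
    adj_of_up (by show (t.1:ℕ) = m + 1; omega) (Or.inl rfl)
  exact mem_cutF.mpr ⟨hadj.symm, by show (t.1:ℕ) ≤ m + 1; omega, by show m ≤ m + 1; omega, htA, htd⟩

lemma subE5 {b : Bool} (h : m + 1 ≤ n) : E5 n m h A b ⊆ cutF n (m+1) A := by
  intro p hp
  obtain ⟨t, ht, rfl⟩ := Finset.mem_image.mp hp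
  obtain ⟨htA, htm, htb, htd⟩ := Finset.mem_filter.mp ht
  have hadj : (fftGraph n).Adj (dX n m h t) t :=
    adj_of_up (by show (t.1:ℕ) = m + 1; omega)
      (Or.inr (by show (t.2:ℕ) = ((t.2:ℕ) ^^^ 2 ^ m) ^^^ 2 ^ m; rw [xor_cancel_right]))
  exact mem_cutF.mpr ⟨hadj.symm, by show (t.1:ℕ) ≤ m + 1; omega, by show m ≤ m + 1; omega, htA, htd⟩

lemma cut_lower (h : m + 1 ≤ n) (A : Finset (Vtx n)) :
    (cutF n m (Bb n m A false)).card + (cutF n m (Bb n m A true)).card + (E3 n m h A).card +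
      (E4 n m h A false).card + (E4 n m h A true).card +
      (E5 n m h A false).card + (E5 n m h A true).card ≤ (cutF n (m+1) A).card := by
  set s1 := cutF n m (Bb n m A false)
  set s2 := cutF n m (Bb n m A true)
  set s3 := E3 n m h A
  set s4 := E4 n m h A false
  set s5 := E4 n m h A true
  set s6 := E5 n m h A false
  set s7 := E5 n m h A true
  have d12 : Disjoint s1 s2 := disj2 shE1 shE1 fun p h1 h2 => by
    have := h1.2.2; have := h2.2.2; simp_all
  have d13 : Disjoint s1 s3 := disj2 shE1 shE3 fun p h1 h2 => by omega
  have d23 : Disjoint s2 s3 := disj2 shE1 shE3 fun p h1 h2 => by omega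
  have d14 : Disjoint s1 s4 := disj2 shE1 shE4 fun p h1 h2 => by omega
  have d24 : Disjoint s2 s4 := disj2 shE1 shE4 fun p h1 h2 => by omega
  have d34 : Disjoint s3 s4 := disj2 shE3 shE4 fun p h1 h2 => by omega
  have d15 : Disjoint s1 s5 := disj2 shE1 shE4 fun p h1 h2 => by omega
  have d25 : Disjoint s2 s5 := disj2 shE1 shE4 fun p h1 h2 => by omega
  have d35 : Disjoint s3 s5 := disj2 shE3 shE4 fun p h1 h2 => by omega
  have d45 : Disjoint s4 s5 := disj2 shE4 shE4 fun p h1 h2 => by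
    have := h1.2.2.1; have := h2.2.2.1; simp_all
  have d16 : Disjoint s1 s6 := disj2 shE1 shE5 fun p h1 h2 => by omega
  have d26 : Disjoint s2 s6 := disj2 shE1 shE5 fun p h1 h2 => by omega
  have d36 : Disjoint s3 s6 := disj2 shE3 shE5 fun p h1 h2 => by omega
  have d46 : Disjoint s4 s6 := disj2 shE4 shE5 fun p h1 h2 =>
    xor_ne_self (h1.2.2.2 ▸ h2.2.2.2).symm
  have d56 : Disjoint s5 s6 := disj2 shE4 shE5 fun p h1 h2 =>
    xor_ne_self (h1.2.2.2 ▸ h2.2.2.2).symm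
  have d17 : Disjoint s1 s7 := disj2 shE1 shE5 fun p h1 h2 => by omega
  have d27 : Disjoint s2 s7 := disj2 shE1 shE5 fun p h1 h2 => by omega
  have d37 : Disjoint s3 s7 := disj2 shE3 shE5 fun p h1 h2 => by omega
  have d47 : Disjoint s4 s7 := disj2 shE4 shE5 fun p h1 h2 =>
    xor_ne_self (h1.2.2.2 ▸ h2.2.2.2).symm
  have d57 : Disjoint s5 s7 := disj2 shE4 shE5 fun p h1 h2 =>
    xor_ne_self (h1.2.2.2 ▸ h2.2.2.2).symm
  have d67 : Disjoint s6 s7 := disj2 shE5 shE5 fun p h1 h2 => by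
    have := h1.2.2.1; have := h2.2.2.1; simp_all
  have hsub : ((((((s1 ∪ s2) ∪ s3) ∪ s4) ∪ s5) ∪ s6) ∪ s7) ⊆ cutF n (m+1) A := by
    refine Finset.union_subset (Finset.union_subset (Finset.union_subset (Finset.union_subset
      (Finset.union_subset (Finset.union_subset ?_ ?_) ?_) ?_) ?_) ?_) ?_
    exacts [subE1 h, subE1 h, subE3 h, subE4 h, subE4 h, subE5 h, subE5 h]
  have hcard : ((((((s1 ∪ s2) ∪ s3) ∪ s4) ∪ s5) ∪ s6) ∪ s7).card =
      s1.card + s2.card + s3.card + s4.card + s5.card + s6.card + s7.card := by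
    rw [Finset.card_union_of_disjoint, Finset.card_union_of_disjoint,
      Finset.card_union_of_disjoint, Finset.card_union_of_disjoint,
      Finset.card_union_of_disjoint, Finset.card_union_of_disjoint d12]
    · exact Finset.disjoint_union_left.mpr ⟨d13, d23⟩
    · exact Finset.disjoint_union_left.mpr ⟨Finset.disjoint_union_left.mpr ⟨d14, d24⟩, d34⟩
    · exact Finset.disjoint_union_left.mpr ⟨Finset.disjoint_union_left.mpr
        ⟨Finset.disjoint_union_left.mpr ⟨d15, d25⟩, d35⟩, d45⟩
    · exact Finset.disjoint_union_left.mpr ⟨Finset.disjoint_union_left.mpr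
        ⟨Finset.disjoint_union_left.mpr ⟨Finset.disjoint_union_left.mpr
          ⟨d16, d26⟩, d36⟩, d46⟩, d56⟩
    · exact Finset.disjoint_union_left.mpr ⟨Finset.disjoint_union_left.mpr
        ⟨Finset.disjoint_union_left.mpr ⟨Finset.disjoint_union_left.mpr
          ⟨Finset.disjoint_union_left.mpr ⟨d17, d27⟩, d37⟩, d47⟩, d57⟩, d67⟩
  calc s1.card + s2.card + s3.card + s4.card + s5.card + s6.card + s7.card
      = ((((((s1 ∪ s2) ∪ s3) ∪ s4) ∪ s5) ∪ s6) ∪ s7).card := hcard.symm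
    _ ≤ (cutF n (m+1) A).card := Finset.card_le_card hsub

end FFTAux

namespace FFTAux
open Finset

variable {n m : ℕ} {A : Finset (Vtx n)}

lemma card_add_le_of_disjoint {α : Type*} {s t u : Finset α} (hs : s ⊆ u) (ht : t ⊆ u)
    (hd : Disjoint s t) : s.card + t.card ≤ u.card := by
  classical
  rw [← Finset.card_union_of_disjoint hd]
  exact Finset.card_le_card (Finset.union_subset hs ht)

lemma testBit_flip {x k : ℕ} : (x ^^^ 2 ^ k).testBit k = !(x.testBit k) := by
  simp [Nat.testBit_xor, Nat.testBit_two_pow_self, Bool.xor_comm]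

lemma card_split_A (hsupp : ∀ v ∈ A, (v.1:ℕ) ≤ m + 1) :
    A.card = (Bb n m A false).card + (Bb n m A true).card + (Tt n m A).card := by
  classical
  have h1 := Finset.card_filter_add_card_filter_not (s := A)
    (p := fun v => (v.1:ℕ) ≤ m)
  have h2 : A.filter (fun v => ¬((v.1:ℕ) ≤ m)) = Tt n m A := by
    rw [Tt]; exact Finset.filter_congr (fun v hv => by have := hsupp v hv; omega)
  have h3 := Finset.card_filter_add_card_filter_not
    (s := A.filter (fun v => (v.1:ℕ) ≤ m)) (p := fun v => (v.2:ℕ).testBit m = false)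
  have h4 : (A.filter (fun v => (v.1:ℕ) ≤ m)).filter (fun v => (v.2:ℕ).testBit m = false)
      = Bb n m A false := by rw [Bb, Finset.filter_filter]
  have h5 : (A.filter (fun v => (v.1:ℕ) ≤ m)).filter
      (fun v => ¬((v.2:ℕ).testBit m = false)) = Bb n m A true := by
    rw [Bb, Finset.filter_filter]
    exact Finset.filter_congr (fun v hv => by simp)
  rw [h2] at h1
  rw [h4, h5] at h3
  omega

lemma a_bound (h : m + 1 ≤ n) (A : Finset (Vtx n)) :
    (Aa n m A).card ≤ (E3 n m h A).card + (Tt n m A).card := by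
  classical
  have h1 := Finset.card_filter_add_card_filter_not (s := Aa n m A)
    (p := fun v => uS n m h v ∈ A)
  have hout : ((Aa n m A).filter (fun v => ¬(uS n m h v ∈ A))).card ≤ (E3 n m h A).card := by
    refine Finset.card_le_card_of_injOn (fun v => (v, uS n m h v)) ?_ ?_
    · intro v hv
      obtain ⟨hv1, hv2⟩ := Finset.mem_filter.mp hv
      obtain ⟨hvA, hvm⟩ := Finset.mem_filter.mp hv1
      exact Finset.mem_image.mpr ⟨v, Finset.mem_filter.mpr ⟨hvA, hvm, hv2⟩, rfl⟩
    · intro a _ b _ hab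
      exact congrArg Prod.fst hab
  have hin : ((Aa n m A).filter (fun v => uS n m h v ∈ A)).card ≤ (Tt n m A).card := by
    refine Finset.card_le_card_of_injOn (uS n m h) ?_ ?_
    · intro v hv
      obtain ⟨hv1, hv2⟩ := Finset.mem_filter.mp hv
      exact Finset.mem_filter.mpr ⟨hv2, rfl⟩
    · intro a ha b hb hab
      obtain ⟨ha1, -⟩ := Finset.mem_filter.mp ha
      obtain ⟨hb1, -⟩ := Finset.mem_filter.mp hb
      have h2 := congrArg Prod.snd hab
      have ham : (a.1 : ℕ) = m := (Finset.mem_filter.mp ha1).2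
      have hbm : (b.1 : ℕ) = m := (Finset.mem_filter.mp hb1).2
      exact Prod.ext (Fin.ext (by omega)) h2
  omega

lemma x_upper {b : Bool} : (bndF n m (Bb n m A b)).card ≤
    (Zzb n m A b).card + (Aab n m A b).card := by
  refine le_trans (Finset.card_le_card ?_) (Finset.card_union_le _ _)
  intro v hv
  obtain ⟨hv1, hv2⟩ := mem_bndF.mp hv
  obtain ⟨hvA, hvm, hvb⟩ := Finset.mem_filter.mp hv1
  rcases hv2 with h0 | hm
  · exact Finset.mem_union_left _ (Finset.mem_filter.mpr ⟨hvA, h0, hvb⟩)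
  · exact Finset.mem_union_right _ (Finset.mem_filter.mpr ⟨hvA, hm, hvb⟩)

lemma bitsplit_sum {P : Vtx n → Prop} [DecidablePred P] :
    ((A.filter (fun v => P v ∧ (v.2:ℕ).testBit m = false)).card +
      (A.filter (fun v => P v ∧ (v.2:ℕ).testBit m = true)).card) ≤ (A.filter P).card := by
  refine card_add_le_of_disjoint ?_ ?_ ?_
  · intro v hv
    obtain ⟨hA, h1, -⟩ := Finset.mem_filter.mp hv
    exact Finset.mem_filter.mpr ⟨hA, h1⟩
  · intro v hv
    obtain ⟨hA, h1, -⟩ := Finset.mem_filter.mp hv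
    exact Finset.mem_filter.mpr ⟨hA, h1⟩
  · refine Finset.disjoint_left.mpr fun {v} h1 h2 => ?_
    have hb1 := (Finset.mem_filter.mp h1).2.2
    have hb2 := (Finset.mem_filter.mp h2).2.2
    simp_all

lemma zz_sum : (Zzb n m A false).card + (Zzb n m A true).card ≤ (Zz n A).card :=
  bitsplit_sum

lemma aa_sum : (Aab n m A false).card + (Aab n m A true).card ≤ (Aa n m A).card :=
  bitsplit_sum

end FFTAux

namespace FFTAux
open Finset

variable {n m : ℕ} {A : Finset (Vtx n)}

lemma tb_straight (h : m + 1 ≤ n) (A : Finset (Vtx n)) (b : Bool) :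
    (Tb n m A b).card ≤ (E4 n m h A b).card + (Aab n m A b).card := by
  classical
  have h1 := Finset.card_filter_add_card_filter_not (s := Tb n m A b)
    (p := fun t => dS n m h t ∈ A)
  have hout : ((Tb n m A b).filter (fun t => ¬(dS n m h t ∈ A))).card ≤ (E4 n m h A b).card := by
    refine Finset.card_le_card_of_injOn (fun t => (t, dS n m h t)) ?_ ?_
    · intro t ht
      obtain ⟨ht1, ht2⟩ := Finset.mem_filter.mp ht
      obtain ⟨htA, htm, htb⟩ := Finset.mem_filter.mp ht1
      exact Finset.mem_image.mpr ⟨t, Finset.mem_filter.mpr ⟨htA, htm, htb, ht2⟩, rfl⟩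
    · intro a _ b _ hab
      exact congrArg Prod.fst hab
  have hin : ((Tb n m A b).filter (fun t => dS n m h t ∈ A)).card ≤ (Aab n m A b).card := by
    refine Finset.card_le_card_of_injOn (dS n m h) ?_ ?_
    · intro t ht
      obtain ⟨ht1, ht2⟩ := Finset.mem_filter.mp ht
      obtain ⟨htA, htm, htb⟩ := Finset.mem_filter.mp ht1
      exact Finset.mem_filter.mpr ⟨ht2, rfl, htb⟩
    · intro a ha c hc hac
      obtain ⟨ha1, -⟩ := Finset.mem_filter.mp ha
      obtain ⟨hc1, -⟩ := Finset.mem_filter.mp hc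
      have ham : (a.1 : ℕ) = m + 1 := (Finset.mem_filter.mp ha1).2.1
      have hcm : (c.1 : ℕ) = m + 1 := (Finset.mem_filter.mp hc1).2.1
      have h2 := congrArg Prod.snd hac
      exact Prod.ext (Fin.ext (by omega)) h2
  omega

lemma tb_flip (h : m + 1 ≤ n) (A : Finset (Vtx n)) (b : Bool) :
    (Tb n m A b).card ≤ (E5 n m h A b).card + (Aab n m A (!b)).card := by
  classical
  have h1 := Finset.card_filter_add_card_filter_not (s := Tb n m A b)
    (p := fun t => dX n m h t ∈ A)
  have hout : ((Tb n m A b).filter (fun t => ¬(dX n m h t ∈ A))).card ≤ (E5 n m h A b).card := by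
    refine Finset.card_le_card_of_injOn (fun t => (t, dX n m h t)) ?_ ?_
    · intro t ht
      obtain ⟨ht1, ht2⟩ := Finset.mem_filter.mp ht
      obtain ⟨htA, htm, htb⟩ := Finset.mem_filter.mp ht1
      exact Finset.mem_image.mpr ⟨t, Finset.mem_filter.mpr ⟨htA, htm, htb, ht2⟩, rfl⟩
    · intro a _ c _ hac
      exact congrArg Prod.fst hac
  have hin : ((Tb n m A b).filter (fun t => dX n m h t ∈ A)).card ≤ (Aab n m A (!b)).card := by
    refine Finset.card_le_card_of_injOn (dX n m h) ?_ ?_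
    · intro t ht
      obtain ⟨ht1, ht2⟩ := Finset.mem_filter.mp ht
      obtain ⟨htA, htm, htb⟩ := Finset.mem_filter.mp ht1
      refine Finset.mem_filter.mpr ⟨ht2, rfl, ?_⟩
      show ((t.2:ℕ) ^^^ 2 ^ m).testBit m = !b
      rw [testBit_flip, htb]
    · intro a ha c hc hac
      obtain ⟨ha1, -⟩ := Finset.mem_filter.mp ha
      obtain ⟨hc1, -⟩ := Finset.mem_filter.mp hc
      have ham : (a.1 : ℕ) = m + 1 := (Finset.mem_filter.mp ha1).2.1
      have hcm : (c.1 : ℕ) = m + 1 := (Finset.mem_filter.mp hc1).2.1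
      have h2 := congrArg (fun w : Vtx n => ((w.2 : Fin (2^n)) : ℕ)) hac
      have h3 : (a.2 : ℕ) ^^^ 2 ^ m = (c.2 : ℕ) ^^^ 2 ^ m := h2
      have h4 : (a.2 : ℕ) = (c.2 : ℕ) := by
        have := congrArg (fun z => z ^^^ 2 ^ m) h3
        simpa [xor_cancel_right] using this
      exact Prod.ext (Fin.ext (by omega)) (Fin.ext h4)
  omega

lemma tt_le_sides : (Tt n m A).card ≤ (Tb n m A false).card + (Tb n m A true).card := by
  classical
  refine le_trans (Finset.card_le_card ?_) (Finset.card_union_le _ _)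
  intro v hv
  obtain ⟨hA, hm⟩ := Finset.mem_filter.mp hv
  rcases Bool.eq_false_or_eq_true ((v.2:ℕ).testBit m) with hb | hb
  · exact Finset.mem_union_right _ (Finset.mem_filter.mpr ⟨hA, hm, hb⟩)
  · exact Finset.mem_union_left _ (Finset.mem_filter.mpr ⟨hA, hm, hb⟩)

lemma zz_tt_le_bnd : (Zz n A).card + (Tt n m A).card ≤ (bndF n (m+1) A).card := by
  refine card_add_le_of_disjoint ?_ ?_ ?_
  · intro v hv
    obtain ⟨hA, h0⟩ := Finset.mem_filter.mp hv
    exact mem_bndF.mpr ⟨hA, Or.inl h0⟩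
  · intro v hv
    obtain ⟨hA, hm⟩ := Finset.mem_filter.mp hv
    exact mem_bndF.mpr ⟨hA, Or.inr hm⟩
  · refine Finset.disjoint_left.mpr fun {v} h1 h2 => ?_
    have hb1 := (Finset.mem_filter.mp h1).2
    have hb2 := (Finset.mem_filter.mp h2).2
    omega

end FFTAux

lemma real_core {x y c0 T δ : ℝ} (hx : 0 ≤ x) (hy : 0 ≤ y) (hc0 : 0 ≤ c0)
    (hδ2 : 2 ≤ δ) (hsum : x + y + c0 ≤ δ) (hxy : x ≤ y) (hT0 : T ≤ c0 + 2 * x) :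
    2 * x * Real.logb 2 x + 2 * y * Real.logb 2 y + T ≤ 2 * δ * Real.logb 2 δ := by
  have hδ0 : (0:ℝ) < δ := by linarith
  have hlogδ : 1 ≤ Real.logb 2 δ := by
    rw [← Real.logb_self_eq_one (b := 2) (by norm_num)]
    exact Real.logb_le_logb_of_le (by norm_num) (by norm_num) hδ2
  have hb1 : 2 * x * Real.logb 2 x + 2 * x ≤ 2 * x * Real.logb 2 δ := by
    rcases eq_or_lt_of_le hx with h0 | h0
    · simp [← h0]
    · have h2x : 2 * x ≤ δ := by linarith
      have hx1 : Real.logb 2 (2 * x) = 1 + Real.logb 2 x := by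
        rw [Real.logb_mul (by norm_num) (ne_of_gt h0), Real.logb_self_eq_one (by norm_num)]
      have hle : Real.logb 2 (2 * x) ≤ Real.logb 2 δ :=
        Real.logb_le_logb_of_le (by norm_num) (by linarith) h2x
      rw [hx1] at hle
      nlinarith
  have hb2 : 2 * y * Real.logb 2 y ≤ 2 * y * Real.logb 2 δ := by
    rcases eq_or_lt_of_le hy with h0 | h0
    · simp [← h0]
    · have hle : Real.logb 2 y ≤ Real.logb 2 δ :=
        Real.logb_le_logb_of_le (by norm_num) h0 (by linarith)
      nlinarith
  have hb3 : c0 ≤ 2 * c0 * Real.logb 2 δ := by nlinarith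
  have hfin : 2 * (x + y + c0) * Real.logb 2 δ ≤ 2 * δ * Real.logb 2 δ := by
    have h0 : (0:ℝ) < Real.logb 2 δ := by linarith
    nlinarith
  nlinarith

lemma real_arith {x y c0 c1 T δ : ℝ} (hx : 0 ≤ x) (hy : 0 ≤ y) (hc0 : 0 ≤ c0) (hc1 : 0 ≤ c1)
    (hδ2 : 2 ≤ δ) (hsum : x + y + c0 + c1 ≤ δ)
    (hT0 : T ≤ c0 + 2 * x) (hT1 : T ≤ c1 + 2 * y) :
    2 * x * Real.logb 2 x + 2 * y * Real.logb 2 y + T ≤ 2 * δ * Real.logb 2 δ := by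
  rcases le_total x y with hxy | hxy
  · have := real_core hx hy hc0 hδ2 (by linarith) hxy hT0
    linarith
  · have := real_core hy hx hc1 hδ2 (by linarith) hxy hT1
    linarith


namespace FFTAux
open Finset

lemma dd_empty {n m : ℕ} : dd n m (∅ : Finset (Vtx n)) = 0 := by
  have h1 : bndF n m (∅ : Finset (Vtx n)) = ∅ := Finset.filter_empty _
  have h2 : cutF n m (∅ : Finset (Vtx n)) = ∅ := by
    refine Finset.eq_empty_of_forall_notMem fun p hp => ?_
    exact absurd (mem_cutF.mp hp).2.2.2.1 (Finset.notMem_empty _)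
  rw [dd, h1, h2]
  simp

lemma a_in_bnd {n m : ℕ} {A : Finset (Vtx n)} {b : Bool} :
    Aab n m A b ⊆ bndF n m (Bb n m A b) := by
  intro v hv
  obtain ⟨hA, hm, hb⟩ := Finset.mem_filter.mp hv
  exact mem_bndF.mpr ⟨Finset.mem_filter.mpr ⟨hA, by omega, hb⟩, Or.inr hm⟩

lemma main (n : ℕ) : ∀ m, 1 ≤ m → m ≤ n → ∀ A : Finset (Vtx n),
    (∀ v ∈ A, (v.1 : ℕ) ≤ m) → (A.card : ℝ) ≤ 2 * dd n m A * Real.logb 2 (dd n m A) := by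
  intro m hm
  induction m, hm using Nat.le_induction with
  | base =>
    intro h1n A hsupp
    rcases A.eq_empty_or_nonempty with rfl | hA
    · simp [dd_empty]
    · have h2 : 2 ≤ dd n 1 A := two_le_dd le_rfl h1n hA hsupp
      have hsub : A ⊆ bndF n 1 A := fun v hv => mem_bndF.mpr ⟨hv, by have := hsupp v hv; omega⟩
      have hcard : A.card ≤ dd n 1 A :=
        le_trans (Finset.card_le_card hsub) (Nat.le_add_right _ _)
      have h2R : (2:ℝ) ≤ (dd n 1 A : ℝ) := by exact_mod_cast h2
      have hlog : 1 ≤ Real.logb 2 (dd n 1 A) := by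
        rw [← Real.logb_self_eq_one (b := 2) (by norm_num)]
        exact Real.logb_le_logb_of_le (by norm_num) (by norm_num) h2R
      have hcR : (A.card:ℝ) ≤ (dd n 1 A : ℝ) := by exact_mod_cast hcard
      nlinarith
  | succ m hm IH =>
    intro hmn A hsupp
    rcases A.eq_empty_or_nonempty with rfl | hA
    · simp [dd_empty]
    · have hmn' : m ≤ n := by omega
      have hIH0 : ((Bb n m A false).card : ℝ) ≤ 2 * (dd n m (Bb n m A false)) *
          Real.logb 2 (dd n m (Bb n m A false)) :=
        IH hmn' _ (fun v hv => (Finset.mem_filter.mp hv).2.1)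
      have hIH1 : ((Bb n m A true).card : ℝ) ≤ 2 * (dd n m (Bb n m A true)) *
          Real.logb 2 (dd n m (Bb n m A true)) :=
        IH hmn' _ (fun v hv => (Finset.mem_filter.mp hv).2.1)
      have hδ2 : 2 ≤ dd n (m+1) A := two_le_dd (by omega) hmn hA hsupp
      have f1 : A.card = (Bb n m A false).card + (Bb n m A true).card + (Tt n m A).card :=
        card_split_A hsupp
      have f2 : (Aa n m A).card ≤ (E3 n m hmn A).card + (Tt n m A).card := a_bound hmn A
      have f3 : dd n m (Bb n m A false) =
          (bndF n m (Bb n m A false)).card + (cutF n m (Bb n m A false)).card := rfl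
      have f3' : dd n m (Bb n m A true) =
          (bndF n m (Bb n m A true)).card + (cutF n m (Bb n m A true)).card := rfl
      have f4 : (bndF n m (Bb n m A false)).card ≤
          (Zzb n m A false).card + (Aab n m A false).card := x_upper
      have f4' : (bndF n m (Bb n m A true)).card ≤
          (Zzb n m A true).card + (Aab n m A true).card := x_upper
      have f5 : (Zzb n m A false).card + (Zzb n m A true).card ≤ (Zz n A).card := zz_sum
      have f6 : (Aab n m A false).card + (Aab n m A true).card ≤ (Aa n m A).card := aa_sum
      have f7 : (Tt n m A).card ≤ (Tb n m A false).card + (Tb n m A true).card := tt_le_sides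
      have f8 : (Tb n m A false).card ≤ (E4 n m hmn A false).card + (Aab n m A false).card :=
        tb_straight hmn A false
      have f9 : (Tb n m A true).card ≤ (E5 n m hmn A true).card + (Aab n m A false).card :=
        tb_flip hmn A true
      have f10 : (Tb n m A false).card ≤ (E5 n m hmn A false).card + (Aab n m A true).card :=
        tb_flip hmn A false
      have f11 : (Tb n m A true).card ≤ (E4 n m hmn A true).card + (Aab n m A true).card :=
        tb_straight hmn A true
      have f12 : (Zz n A).card + (Tt n m A).card ≤ (bndF n (m+1) A).card := zz_tt_le_bnd
      have f13 : (cutF n m (Bb n m A false)).card + (cutF n m (Bb n m A true)).card +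
          (E3 n m hmn A).card + (E4 n m hmn A false).card + (E4 n m hmn A true).card +
          (E5 n m hmn A false).card + (E5 n m hmn A true).card ≤ (cutF n (m+1) A).card :=
        cut_lower hmn A
      have f14 : dd n (m+1) A = (bndF n (m+1) A).card + (cutF n (m+1) A).card := rfl
      have f15 : (Aab n m A false).card ≤ dd n m (Bb n m A false) :=
        le_trans (Finset.card_le_card a_in_bnd) (Nat.le_add_right _ _)
      have f15' : (Aab n m A true).card ≤ dd n m (Bb n m A true) :=
        le_trans (Finset.card_le_card a_in_bnd) (Nat.le_add_right _ _)
      have hsum : dd n m (Bb n m A false) + dd n m (Bb n m A true) +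
          ((E4 n m hmn A false).card + (E5 n m hmn A true).card) +
          ((E4 n m hmn A true).card + (E5 n m hmn A false).card) ≤ dd n (m+1) A := by
        omega
      have hT0 : (Tt n m A).card ≤ ((E4 n m hmn A false).card + (E5 n m hmn A true).card) +
          2 * dd n m (Bb n m A false) := by omega
      have hT1 : (Tt n m A).card ≤ ((E4 n m hmn A true).card + (E5 n m hmn A false).card) +
          2 * dd n m (Bb n m A true) := by omega
      have harith := real_arith (x := (dd n m (Bb n m A false) : ℝ))
        (y := (dd n m (Bb n m A true) : ℝ))
        (c0 := ((E4 n m hmn A false).card + (E5 n m hmn A true).card : ℕ))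
        (c1 := ((E4 n m hmn A true).card + (E5 n m hmn A false).card : ℕ))
        (T := ((Tt n m A).card : ℝ)) (δ := (dd n (m+1) A : ℝ))
        (by positivity) (by positivity) (by positivity) (by positivity)
        (by exact_mod_cast hδ2) (by exact_mod_cast hsum)
        (by exact_mod_cast hT0) (by exact_mod_cast hT1)
      have hcast : (A.card : ℝ) = ((Bb n m A false).card : ℝ) + ((Bb n m A true).card : ℝ) +
          ((Tt n m A).card : ℝ) := by exact_mod_cast congrArg (fun k : ℕ => (k:ℝ)) f1
      rw [hcast]
      linarith

end FFTAux


open FFTAux in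
/-- Isoperimetric inequality for the butterfly graph: for any nonempty vertex set `A`
in `F_n` (`n ≥ 1`), with `δ(A)` the number of vertices of `A` in layer `0` or `n` plus
the number of edges of `F_n` joining `A` to its complement, `|A| ≤ 2 δ(A) log₂ δ(A)`. -/
theorem fft_isoperimetric (n : ℕ) (hn : 1 ≤ n)
    (A : Set (Fin (n + 1) × Fin (2 ^ n))) (hA : A.Nonempty)
    (δ : ℕ)
    (hδ : δ = {v | v ∈ A ∧ ((v.1 : ℕ) = 0 ∨ (v.1 : ℕ) = n)}.ncard +
      {e | e ∈ (fftGraph n).edgeSet ∧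
        ∃ x y, x ∈ A ∧ y ∉ A ∧ e = s(x, y)}.ncard) :
    (A.ncard : ℝ) ≤ 2 * δ * Real.logb 2 δ := by
  classical
  have hfin : A.Finite := Set.toFinite A
  set F := hfin.toFinset with hF
  have hFA : ∀ v, v ∈ F ↔ v ∈ A := fun v => Set.Finite.mem_toFinset hfin
  have hcard : A.ncard = F.card := Set.ncard_eq_toFinset_card A hfin
  have hFne : F.Nonempty := by obtain ⟨v, hv⟩ := hA; exact ⟨v, (hFA v).mpr hv⟩
  have hbnd : {v | v ∈ A ∧ ((v.1 : ℕ) = 0 ∨ (v.1 : ℕ) = n)}.ncard = (bndF n n F).card := by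
    have hset : {v | v ∈ A ∧ ((v.1 : ℕ) = 0 ∨ (v.1 : ℕ) = n)} = ↑(bndF n n F) := by
      ext v
      simp only [Set.mem_setOf_eq, Finset.coe_filter, bndF, Set.mem_setOf_eq,
        Finset.mem_coe, mem_bndF, hFA]
    rw [hset, Set.ncard_coe_finset]
  have hcut : (cutF n n F).card ≤ {e | e ∈ (fftGraph n).edgeSet ∧
      ∃ x y, x ∈ A ∧ y ∉ A ∧ e = s(x, y)}.ncard := by
    have hSfin : {e | e ∈ (fftGraph n).edgeSet ∧
        ∃ x y, x ∈ A ∧ y ∉ A ∧ e = s(x, y)}.Finite := Set.toFinite _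
    rw [Set.ncard_eq_toFinset_card _ hSfin]
    refine Finset.card_le_card_of_injOn (fun p => s(p.1, p.2)) ?_ ?_
    · intro p hp
      obtain ⟨hadj, -, -, h1, h2⟩ := mem_cutF.mp hp
      refine (Set.Finite.mem_toFinset hSfin).mpr ?_
      exact ⟨(fftGraph n).mem_edgeSet.mpr hadj, p.1, p.2, (hFA _).mp h1,
        fun hy => h2 ((hFA _).mpr hy), rfl⟩
    · intro p hp q hq hpq
      obtain ⟨-, -, -, hp1, hp2⟩ := mem_cutF.mp hp
      obtain ⟨-, -, -, hq1, hq2⟩ := mem_cutF.mp hq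
      rcases Sym2.eq_iff.mp hpq with ⟨h1, h2⟩ | ⟨h1, h2⟩
      · exact Prod.ext h1 h2
      · exact absurd (h1 ▸ hp1) hq2
  have h2 : 2 ≤ dd n n F := two_le_dd hn le_rfl hFne (fun v _ => Fin.is_le v.1)
  have hmain := main n n hn le_rfl F (fun v _ => Fin.is_le v.1)
  have hdle : dd n n F ≤ δ := by
    have hd : dd n n F = (bndF n n F).card + (cutF n n F).card := rfl
    rw [hδ, hbnd]
    omega
  have hddR : (2:ℝ) ≤ (dd n n F : ℝ) := by exact_mod_cast h2
  have hdleR : ((dd n n F : ℕ) : ℝ) ≤ (δ : ℝ) := by exact_mod_cast hdle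
  have hlog1 : Real.logb 2 (dd n n F) ≤ Real.logb 2 δ :=
    Real.logb_le_logb_of_le (by norm_num) (by linarith) hdleR
  have hlog0 : 0 ≤ Real.logb 2 (dd n n F) := Real.logb_nonneg (by norm_num) (by linarith)
  have hfinal : 2 * (dd n n F : ℝ) * Real.logb 2 (dd n n F) ≤ 2 * (δ:ℝ) * Real.logb 2 δ := by
    nlinarith
  rw [hcard]
  push_cast
  linarith
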